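/- If (x_n) is a bounded sequence of real numbers, then (1 + x_n/n)^{n²} / exp(n·x_n - x_n²/2) → 1 as n → ∞ (for n large enough that 1 + x_n/n > 0). -/

import Mathlib

open Filter

theorem pow_div_exp_tendsto_one (x : ℕ → ℝ) (C : ℝ) (hC : ∀ n, |x n| ≤ C) :
    Tendsto (fun n : ℕ =>
        (1 + x n / n) ^ (n ^ 2) / Real.exp (n * x n - (x n) ^ 2 / 2))
      atTop (nhds 1) := by
  have hC0 : 0 ≤ C := le_trans (abs_nonneg _) (hC 0)
  set a : ℕ → ℝ := fun n =>
    (n : ℝ) ^ 2 * Real.log (1 + x n / n) - (n * x n - (x n) ^ 2 / 2) with ha_def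
  -- key estimates for large n
  have hlarge : ∀ᶠ n : ℕ in atTop, (2 * C + 1 : ℝ) ≤ n := by
    exact tendsto_natCast_atTop_atTop.eventually_ge_atTop (2 * C + 1)
  have key : ∀ᶠ n : ℕ in atTop,
      |a n| ≤ 2 * C ^ 3 / n ∧ 0 < 1 + x n / n := by
    filter_upwards [hlarge] with n hn
    have hnpos : (0 : ℝ) < n := by linarith
    set t : ℝ := x n / n with ht
    have htabs : |t| ≤ C / n := by
      rw [ht, abs_div, abs_of_pos hnpos]
      exact div_le_div_of_nonneg_right (hC n) hnpos.le |>.trans_eq rfl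
    have hthalf : |t| < 1 / 2 := by
      have : C / n < 1 / 2 := by
        rw [div_lt_div_iff₀ hnpos (by norm_num)]
        linarith
      linarith [htabs]
    have ht1 : |t| < 1 := by linarith
    have hpos : 0 < 1 + t := by
      have := abs_lt.mp ht1
      linarith [this.1]
    refine ⟨?_, hpos⟩
    have hlog := Real.abs_log_sub_add_sum_range_le (x := -t) (by rwa [abs_neg]) 2
    have hsum : (∑ i ∈ Finset.range 2, (-t) ^ (i + 1) / (i + 1)) = -t + t ^ 2 / 2 := by
      simp [Finset.sum_range_succ]
      ring
    rw [hsum, abs_neg] at hlog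
    have hlog' : |Real.log (1 + t) - t + t ^ 2 / 2| ≤ 2 * |t| ^ 3 := by
      have h1 : (1 : ℝ) - -t = 1 + t := by ring
      rw [h1] at hlog
      have h2 : -t + t ^ 2 / 2 + Real.log (1 + t) = Real.log (1 + t) - t + t ^ 2 / 2 := by
        ring
      rw [h2] at hlog
      have h3 : |t| ^ (2 + 1) / (1 - |t|) ≤ 2 * |t| ^ 3 := by
        rw [div_le_iff₀ (by linarith)]
        have h4 : |t| ^ (2 + 1) = |t| ^ 3 := by norm_num
        rw [h4]
        nlinarith [pow_nonneg (abs_nonneg t) 3, hthalf]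
      linarith
    have haeq : a n = (n : ℝ) ^ 2 * (Real.log (1 + t) - t + t ^ 2 / 2) := by
      have e : x n = t * n := by rw [ht, div_mul_cancel₀ _ hnpos.ne']
      show (n:ℝ)^2 * Real.log (1 + t) - (n * x n - (x n)^2/2) = _
      rw [e]; ring
    rw [haeq, abs_mul, abs_of_nonneg (by positivity : (0:ℝ) ≤ (n:ℝ)^2)]
    have : (n : ℝ) ^ 2 * |Real.log (1 + t) - t + t ^ 2 / 2| ≤ (n:ℝ)^2 * (2 * |t| ^ 3) :=
      mul_le_mul_of_nonneg_left hlog' (by positivity)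
    refine this.trans ?_
    have habs3 : |t| ^ 3 ≤ (C / n) ^ 3 := pow_le_pow_left₀ (abs_nonneg _) htabs 3
    have : (n:ℝ)^2 * (2 * |t|^3) ≤ (n:ℝ)^2 * (2 * (C/n)^3) :=
      mul_le_mul_of_nonneg_left (by linarith) (by positivity)
    refine this.trans_eq ?_
    field_simp
  have ha0 : Tendsto a atTop (nhds 0) := by
    have hb : Tendsto (fun n : ℕ => 2 * C ^ 3 / n) atTop (nhds 0) := by
      simpa using tendsto_const_nhds.div_atTop
        (tendsto_natCast_atTop_atTop (R := ℝ))
    exact squeeze_zero_norm' (key.mono fun n h => h.1) hb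
  have hexp : Tendsto (fun n => Real.exp (a n)) atTop (nhds 1) := by
    simpa [Function.comp_def] using (Real.continuous_exp.tendsto 0).comp ha0
  refine hexp.congr' ?_
  filter_upwards [key] with n hn
  have hpos := hn.2
  rw [ha_def]
  rw [Real.exp_sub]
  congr 1
  have hcast : ((n : ℝ)) ^ 2 = ((n ^ 2 : ℕ) : ℝ) := by push_cast; ring
  rw [hcast, Real.exp_nat_mul, Real.exp_log hpos]
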